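/- Every HGV configuration in tree canonical form typed under a single environment is a well-typed GV configuration: if Γ ⊢ C : R holds in HGV, where Γ is a single type environment (a singleton hyper-environment) and C is in tree canonical form, then Γ ⊢ C : R holds in GV (where each ν-bound endpoint pair is typed by a GV channel-pair binding). -/

import Mathlib

set_option autoImplicit true
set_option maxHeartbeats 1000000

/-! ## HGV types and session types -/

mutual
inductive STy : Type
  | send : Ty → STy → STy      -- !T.S
  | recv : Ty → STy → STy      -- ?T.S
  | ends : STy                 -- end!
  | endr : STy                 -- end?
inductive Ty : Type
  | unit : Ty
  | void : Ty
  | fn   : Ty → Ty → Ty        -- T ⊸ U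
  | prod : Ty → Ty → Ty
  | sum  : Ty → Ty → Ty
  | sess : STy → Ty
end

/-- Session type duality. -/
def STy.dual : STy → STy
  | .send T S => .recv T S.dual
  | .recv T S => .send T S.dual
  | .ends => .endr
  | .endr => .ends

/-! ## HGV terms -/

inductive Term : Type
  | var : String → Term
  | unit : Term
  | lam : String → Term → Term
  | app : Term → Term → Term
  | letu : Term → Term → Term                    -- let () = M in N
  | pair : Term → Term → Term
  | letp : String → String → Term → Term → Term  -- let (x,y) = M in N
  | inl : Term → Term
  | inr : Term → Term
  | case : Term → String → Term → String → Term → Term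
  | absurd : Term → Term
  | fork : Term
  | send : Term
  | recv : Term
  | wait : Term
  | link : Term

inductive IsValue : Term → Prop
  | var : IsValue (.var x)
  | unit : IsValue .unit
  | lam : IsValue (.lam x M)
  | pair : IsValue V → IsValue W → IsValue (.pair V W)
  | inl : IsValue V → IsValue (.inl V)
  | inr : IsValue V → IsValue (.inr V)
  | fork : IsValue .fork
  | send : IsValue .send
  | recv : IsValue .recv
  | wait : IsValue .wait
  | link : IsValue .link

/-- Free variables of a term. -/
def Term.fv : Term → List String
  | .var x => [x]
  | .unit => []
  | .lam x M => M.fv.filter (fun y => y != x)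
  | .app M N => M.fv ++ N.fv
  | .letu M N => M.fv ++ N.fv
  | .pair M N => M.fv ++ N.fv
  | .letp x y M N => M.fv ++ N.fv.filter (fun z => z != x && z != y)
  | .inl M => M.fv
  | .inr M => M.fv
  | .case L x M y N => L.fv ++ M.fv.filter (fun z => z != x) ++ N.fv.filter (fun z => z != y)
  | .absurd M => M.fv
  | .fork => []
  | .send => []
  | .recv => []
  | .wait => []
  | .link => []

/-- Substitution of `N` for the variable `x` (capture is avoided by not
descending under binders that shadow `x`). -/
def Term.subst (N : Term) (x : String) : Term → Term
  | .var y => if y = x then N else .var y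
  | .unit => .unit
  | .lam y M => .lam y (if y = x then M else Term.subst N x M)
  | .app M₁ M₂ => .app (Term.subst N x M₁) (Term.subst N x M₂)
  | .letu M₁ M₂ => .letu (Term.subst N x M₁) (Term.subst N x M₂)
  | .pair M₁ M₂ => .pair (Term.subst N x M₁) (Term.subst N x M₂)
  | .letp y z M₁ M₂ => .letp y z (Term.subst N x M₁) (if y = x ∨ z = x then M₂ else Term.subst N x M₂)
  | .inl M => .inl (Term.subst N x M)
  | .inr M => .inr (Term.subst N x M)
  | .case L y M₁ z M₂ =>
      .case (Term.subst N x L) y (if y = x then M₁ else Term.subst N x M₁)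
        z (if z = x then M₂ else Term.subst N x M₂)
  | .absurd M => .absurd (Term.subst N x M)
  | .fork => .fork
  | .send => .send
  | .recv => .recv
  | .wait => .wait
  | .link => .link

/-! ## Linear type environments -/

abbrev Env := List (String × Ty)

/-- `Γ, Δ` is defined only when the domains are disjoint. -/
def Env.disj (Γ Δ : Env) : Prop := ∀ x T U, (x, T) ∈ Γ → (x, U) ∈ Δ → False

def Env.dom (Γ : Env) : List String := Γ.map Prod.fst

/-! ## Term typing -/

inductive HasType : Env → Term → Ty → Prop
  | var : HasType [(x, T)] (.var x) T
  | unit : HasType [] .unit .unit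
  | lam : HasType ((x, T) :: Γ) M U → HasType Γ (.lam x M) (.fn T U)
  | app : Env.disj Γ Δ → HasType Γ M (.fn T U) → HasType Δ N T →
      HasType (Γ ++ Δ) (.app M N) U
  | letu : Env.disj Γ Δ → HasType Γ M .unit → HasType Δ N T →
      HasType (Γ ++ Δ) (.letu M N) T
  | pair : Env.disj Γ Δ → HasType Γ M T → HasType Δ N U →
      HasType (Γ ++ Δ) (.pair M N) (.prod T U)
  | letp : Env.disj Γ Δ → HasType Γ M (.prod T T') →
      HasType ((x, T) :: (y, T') :: Δ) N U →
      HasType (Γ ++ Δ) (.letp x y M N) U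
  | inl : HasType Γ M T → HasType Γ (.inl M) (.sum T U)
  | inr : HasType Γ M U → HasType Γ (.inr M) (.sum T U)
  | case : Env.disj Γ Δ → HasType Γ L (.sum T T') →
      HasType ((x, T) :: Δ) M U → HasType ((y, T') :: Δ) N U →
      HasType (Γ ++ Δ) (.case L x M y N) U
  | absurd : Env.disj Γ Δ → HasType Γ M .void → HasType (Γ ++ Δ) (.absurd M) T
  | fork : HasType [] .fork (.fn (.fn (.sess S) (.sess .ends)) (.sess S.dual))
  | send : HasType [] .send (.fn (.prod T (.sess (.send T S))) (.sess S))
  | recv : HasType [] .recv (.fn (.sess (.recv T S)) (.prod T (.sess S)))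
  | wait : HasType [] .wait (.fn (.sess .endr) .unit)
  | link : HasType [] .link (.fn (.prod (.sess S) (.sess S.dual)) (.sess .ends))
  | perm : List.Perm Γ Δ → HasType Γ M T → HasType Δ M T

/-! ## Evaluation contexts -/

inductive ECtx : Type
  | hole : ECtx
  | appL : ECtx → Term → ECtx
  | appR : (V : Term) → IsValue V → ECtx → ECtx
  | letu : ECtx → Term → ECtx
  | pairL : ECtx → Term → ECtx
  | pairR : (V : Term) → IsValue V → ECtx → ECtx
  | letp : String → String → ECtx → Term → ECtx
  | inl : ECtx → ECtx
  | inr : ECtx → ECtx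
  | case : ECtx → String → Term → String → Term → ECtx
  | absurd : ECtx → ECtx

def ECtx.plug : ECtx → Term → Term
  | .hole, M => M
  | .appL E N, M => .app (E.plug M) N
  | .appR V _ E, M => .app V (E.plug M)
  | .letu E N, M => .letu (E.plug M) N
  | .pairL E N, M => .pair (E.plug M) N
  | .pairR V _ E, M => .pair V (E.plug M)
  | .letp x y E N, M => .letp x y (E.plug M) N
  | .inl E, M => .inl (E.plug M)
  | .inr E, M => .inr (E.plug M)
  | .case E x N₁ y N₂, M => .case (E.plug M) x N₁ y N₂
  | .absurd E, M => .absurd (E.plug M)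

/-! ## Term reduction M ⟶_M N -/

inductive TRed : Term → Term → Prop
  | beta : IsValue V → TRed (.app (.lam x M) V) (Term.subst V x M)
  | letu : TRed (.letu .unit M) M
  | letp : IsValue V → IsValue W →
      TRed (.letp x y (.pair V W) M) (Term.subst W y (Term.subst V x M))
  | caseL : IsValue V → TRed (.case (.inl V) x M y N) (Term.subst V x M)
  | caseR : IsValue V → TRed (.case (.inr V) x M y N) (Term.subst V y N)
  | lift : TRed M N → TRed (ECtx.plug E M) (ECtx.plug E N)
/-! ## Configuration types and partial merging -/

inductive RTy : Type
  | main : Ty → RTy   -- a configuration containing exactly one main thread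
  | child : RTy       -- a configuration of child threads only

/-- The partial merge `R₁ ⊓ R₂`, defined when at most one of the two is a
main-thread type. -/
def RTy.merge : RTy → RTy → Option RTy
  | .child, R => some R
  | .main T, .child => some (.main T)
  | .main _, .main _ => none

/-! ## HGV configurations -/

inductive TFlag : Type
  | main  : TFlag   -- ●
  | child : TFlag   -- ○

inductive Config : Type
  | thread : TFlag → Term → Config
  | par : Config → Config → Config                 -- C ∥ D
  | res : String → String → Config → Config        -- (νxy)C
  | linkTh : String → String → String → Config     -- link thread  z (x↔y)

def Config.fv : Config → List String
  | .thread _ M => M.fv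
  | .par C D => C.fv ++ D.fv
  | .res x y C => C.fv.filter (fun z => z != x && z != y)
  | .linkTh z x y => [z, x, y]

/-! ## Structural congruence of configurations -/

inductive Cong : Config → Config → Prop
  | parComm : Cong (.par C D) (.par D C)
  | parAssoc : Cong (.par C (.par D E)) (.par (.par C D) E)
  | resComm : Cong (.res x x' (.res y y' C)) (.res y y' (.res x x' C))
  | resSwap : Cong (.res x y C) (.res y x C)
  | scopeExt : x ∉ Config.fv C → y ∉ Config.fv C →
      Cong (.par C (.res x y D)) (.res x y (.par C D))
  | linkComm : Cong (.linkTh z x y) (.linkTh z y x)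
  | refl : Cong C C
  | symm : Cong C D → Cong D C
  | trans : Cong C D → Cong D E → Cong C E
  | parCong : Cong C C' → Cong D D' → Cong (.par C D) (.par C' D')
  | resCong : Cong C D → Cong (.res x y C) (.res x y D)

/-! ## Configuration typing with hyper-environments -/

abbrev HEnv := List Env

inductive CTyped : HEnv → Config → RTy → Prop
  | main : HasType Γ M T → CTyped [Γ] (.thread .main M) (.main T)
  | child : HasType Γ M (.sess .ends) → CTyped [Γ] (.thread .child M) .child
  | linkTh : CTyped [[(z, Ty.sess .endr), (x, Ty.sess S), (y, Ty.sess S.dual)]]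
      (.linkTh z x y) .child
  | par : CTyped G C R₁ → CTyped H D R₂ → RTy.merge R₁ R₂ = some R →
      CTyped (G ++ H) (.par C D) R
  | res : CTyped (((x, Ty.sess S) :: Γ₁) :: ((y, Ty.sess S.dual) :: Γ₂) :: G) C R →
      Env.disj Γ₁ Γ₂ → CTyped ((Γ₁ ++ Γ₂) :: G) (.res x y C) R
  | permH : List.Perm G H → CTyped G C R → CTyped H C R
  | permE : List.Perm Γ Δ → CTyped (Γ :: G) C R → CTyped (Δ :: G) C R

/-! ## Configuration reduction -/

inductive CRed : Config → Config → Prop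
  | reifyFork :
      IsValue V → x ≠ y →
      x ∉ Term.fv (ECtx.plug E (.app .fork V)) →
      y ∉ Term.fv (ECtx.plug E (.app .fork V)) →
      CRed (.thread φ (ECtx.plug E (.app .fork V)))
           (.res x y (.par (.thread φ (ECtx.plug E (.var x)))
                           (.thread .child (.app V (.var y)))))
  | commSend :
      IsValue V →
      CRed (.res x y (.par (.thread φ (ECtx.plug E (.app .send (.pair V (.var x)))))
                           (.thread ψ (ECtx.plug E' (.app .recv (.var y))))))
           (.res x y (.par (.thread φ (ECtx.plug E (.var x)))
                           (.thread ψ (ECtx.plug E' (.pair V (.var y))))))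
  | commClose :
      CRed (.res x y (.par (.thread φ (ECtx.plug E (.app .wait (.var x))))
                           (.thread .child (.var y))))
           (.thread φ (ECtx.plug E .unit))
  | reifyLink :
      z ≠ z' →
      z ∉ Term.fv (ECtx.plug E (.app .link (.pair (.var x) (.var y)))) →
      z' ∉ Term.fv (ECtx.plug E (.app .link (.pair (.var x) (.var y)))) →
      CRed (.thread φ (ECtx.plug E (.app .link (.pair (.var x) (.var y)))))
           (.res z z' (.par (.linkTh z x y) (.thread φ (ECtx.plug E (.var z')))))
  | commLink :
      CRed (.res z z' (.res x x' (.par (.linkTh z x y)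
              (.par (.thread .child (.var z')) (.thread φ M)))))
           (.thread φ (Term.subst (.var y) x' M))
  | res : CRed C D → CRed (.res x y C) (.res x y D)
  | par : CRed C C' → CRed (.par C D) (.par C' D)
  | liftM : TRed M N → CRed (.thread φ M) (.thread φ N)
  | equiv : Cong C C' → CRed C' D' → Cong D' D → CRed C D

/-! ## GV configuration typing -/

/-- Entries of GV type environments: ordinary bindings `x : T` and
channel-pair bindings `⟨x,x'⟩ : S♯`. -/
inductive GEntry : Type
  | single : String → Ty → GEntry
  | chan : String → String → STy → GEntry

abbrev GEnv := List GEntry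

def GEntry.isSingle : GEntry → Prop
  | .single _ _ => True
  | .chan _ _ _ => False

/-- View a plain type environment as a GV environment. -/
def Env.toGEnv (Γ : Env) : GEnv := Γ.map (fun p => GEntry.single p.1 p.2)

/-- Extract the ordinary bindings of a GV environment. -/
def GEnv.toEnv (Γ : GEnv) : Env :=
  Γ.filterMap (fun e => match e with | .single x T => some (x, T) | .chan _ _ _ => none)

/-- GV configuration typing: a single environment with channel-pair bindings;
parallel compositions must share exactly one channel. -/
inductive GTyped : GEnv → Config → RTy → Prop
  | main : HasType Γ M T → GTyped (Env.toGEnv Γ) (.thread .main M) (.main T)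
  | child : HasType Γ M (.sess .ends) → GTyped (Env.toGEnv Γ) (.thread .child M) .child
  | linkTh : GTyped [.single z (.sess .endr), .single x (.sess S), .single y (.sess S.dual)]
      (.linkTh z x y) .child
  | new : GTyped (GEntry.chan x y S :: Γ) C R → GTyped Γ (.res x y C) R
  | connect₁ : GTyped (GEntry.single y (.sess S) :: Γ₁) C R₁ →
      GTyped (GEntry.single y' (.sess S.dual) :: Γ₂) D R₂ →
      RTy.merge R₁ R₂ = some R →
      GTyped (GEntry.chan y y' S :: (Γ₁ ++ Γ₂)) (.par C D) R
  | connect₂ : GTyped (GEntry.single y' (.sess S.dual) :: Γ₁) C R₁ →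
      GTyped (GEntry.single y (.sess S) :: Γ₂) D R₂ →
      RTy.merge R₁ R₂ = some R →
      GTyped (GEntry.chan y y' S :: (Γ₁ ++ Γ₂)) (.par C D) R
  | perm : List.Perm Γ Δ → GTyped Γ C R → GTyped Δ C R

/-! ## Auxiliary threads, tree canonical forms, and blocked threads -/

/-- Auxiliary threads: child threads and link threads. -/
inductive Aux : Config → Prop
  | child : Aux (.thread .child M)
  | linkTh : Aux (.linkTh z x y)

/-- Tree canonical forms: `CF ::= φ M | (νxy)(A ∥ CF)` where the auxiliary
thread `A` uses the endpoint `x`. -/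
inductive TCF : Config → Prop
  | thread : TCF (.thread φ M)
  | res : Aux A → x ∈ Config.fv A → TCF C → TCF (.res x y (.par A C))

/-- A thread is blocked on an endpoint `z` if it is a link thread mentioning
`z`, or a thread whose term is an evaluation context filled with a
communication action (`send`, `recv` or `wait`) on `z`. -/
inductive BlockedOn : Config → String → Prop
  | linkZ : BlockedOn (.linkTh z x y) z
  | linkX : BlockedOn (.linkTh z x y) x
  | linkY : BlockedOn (.linkTh z x y) y
  | send : IsValue V → M = ECtx.plug E (.app .send (.pair V (.var z))) →
      BlockedOn (.thread φ M) z
  | recv : M = ECtx.plug E (.app .recv (.var z)) → BlockedOn (.thread φ M) z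
  | wait : M = ECtx.plug E (.app .wait (.var z)) → BlockedOn (.thread φ M) z

/-! ## Auxiliary machinery for the proof -/

def HEnv.norm (G : HEnv) : Multiset (Multiset (String × Ty)) :=
  Multiset.ofList (G.map (fun Γ => Multiset.ofList Γ))

lemma norm_perm {G H : HEnv} (h : List.Perm G H) : HEnv.norm G = HEnv.norm H :=
  Multiset.coe_eq_coe.mpr (h.map _)

lemma norm_cons_perm {Γ Δ : Env} {G : HEnv} (h : List.Perm Γ Δ) :
    HEnv.norm (Γ :: G) = HEnv.norm (Δ :: G) := by
  unfold HEnv.norm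
  simp only [List.map_cons]
  rw [show (Multiset.ofList Γ = Multiset.ofList Δ) from Multiset.coe_eq_coe.mpr h]

lemma norm_len {G H : HEnv} (h : HEnv.norm G = HEnv.norm H) : G.length = H.length := by
  have := congrArg Multiset.card h
  simpa [HEnv.norm, Multiset.coe_card] using this

lemma pair_perm {α : Type _} {a b c d : α} (h : List.Perm [a, b] [c, d]) :
    (a = c ∧ b = d) ∨ (a = d ∧ b = c) := by
  have ha : a ∈ [c, d] := h.subset (by simp)
  simp at ha
  rcases ha with rfl | rfl
  · left
    have hbd := List.perm_singleton.mp h.cons_inv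
    exact ⟨rfl, by injection hbd⟩
  · right
    have h' : List.Perm [a, b] [a, c] := h.trans (List.Perm.swap a c [])
    have hbc := List.perm_singleton.mp h'.cons_inv
    exact ⟨rfl, by injection hbc⟩

/-- Inversion for threads. -/
lemma inv_thread {G C R} (h : CTyped G C R) :
    ∀ {φ M}, C = .thread φ M →
    ∃ Γ, G = [Γ] ∧
      ((∃ T, φ = .main ∧ R = .main T ∧ HasType Γ M T) ∨
       (φ = .child ∧ R = .child ∧ HasType Γ M (.sess .ends))) := by
  induction h with
  | main h => intro φ M heq; cases heq; exact ⟨_, rfl, .inl ⟨_, rfl, rfl, h⟩⟩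
  | child h => intro φ M heq; cases heq; exact ⟨_, rfl, .inr ⟨rfl, rfl, h⟩⟩
  | linkTh => intro _ _ heq; exact Config.noConfusion heq
  | par _ _ _ _ _ => intro _ _ heq; exact Config.noConfusion heq
  | res _ _ _ => intro _ _ heq; exact Config.noConfusion heq
  | permH hp _ ih =>
      intro φ M heq
      obtain ⟨Γ, rfl, hd⟩ := ih heq
      exact ⟨Γ, (List.singleton_perm.mp hp).symm, hd⟩
  | permE hp _ ih =>
      intro φ M heq
      obtain ⟨Γ', hG, hd⟩ := ih heq
      obtain ⟨rfl, rfl⟩ : Γ' = _ ∧ _ = ([] : HEnv) := by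
        injection hG with h1 h2; exact ⟨h1.symm, h2⟩
      refine ⟨_, rfl, ?_⟩
      rcases hd with ⟨T, h1, h2, h3⟩ | ⟨h1, h2, h3⟩
      · exact .inl ⟨T, h1, h2, .perm hp h3⟩
      · exact .inr ⟨h1, h2, .perm hp h3⟩

/-- Inversion for link threads. -/
lemma inv_link {G C R} (h : CTyped G C R) :
    ∀ {z a b}, C = .linkTh z a b →
    ∃ Γ S, G = [Γ] ∧ R = .child ∧
      List.Perm Γ [(z, Ty.sess .endr), (a, Ty.sess S), (b, Ty.sess S.dual)] := by
  induction h with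
  | main _ => intro _ _ _ heq; exact Config.noConfusion heq
  | child _ => intro _ _ _ heq; exact Config.noConfusion heq
  | linkTh => intro _ _ _ heq; cases heq; exact ⟨_, _, rfl, rfl, List.Perm.refl _⟩
  | par _ _ _ _ _ => intro _ _ _ heq; exact Config.noConfusion heq
  | res _ _ _ => intro _ _ _ heq; exact Config.noConfusion heq
  | permH hp _ ih =>
      intro z a b heq
      obtain ⟨Γ, S, rfl, hR, hpe⟩ := ih heq
      exact ⟨Γ, S, (List.singleton_perm.mp hp).symm, hR, hpe⟩
  | permE hp _ ih =>
      intro z a b heq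
      obtain ⟨Γ', S, hG, hR, hpe⟩ := ih heq
      obtain ⟨rfl, rfl⟩ : Γ' = _ ∧ _ = ([] : HEnv) := by
        injection hG with h1 h2; exact ⟨h1.symm, h2⟩
      exact ⟨_, S, rfl, hR, hp.symm.trans hpe⟩

/-- Inversion for parallel compositions. -/
lemma inv_par {G C R} (h : CTyped G C R) :
    ∀ {C₁ C₂}, C = .par C₁ C₂ →
    ∃ G₁ G₂ R₁ R₂, CTyped G₁ C₁ R₁ ∧ CTyped G₂ C₂ R₂ ∧
      RTy.merge R₁ R₂ = some R ∧ HEnv.norm G = HEnv.norm (G₁ ++ G₂) := by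
  induction h with
  | main _ => intro _ _ heq; exact Config.noConfusion heq
  | child _ => intro _ _ heq; exact Config.noConfusion heq
  | linkTh => intro _ _ heq; exact Config.noConfusion heq
  | par h1 h2 hm _ _ =>
      intro C₁ C₂ heq; cases heq; exact ⟨_, _, _, _, h1, h2, hm, rfl⟩
  | res _ _ _ => intro _ _ heq; exact Config.noConfusion heq
  | permH hp _ ih =>
      intro C₁ C₂ heq
      obtain ⟨G₁, G₂, R₁, R₂, a, b, c, d⟩ := ih heq
      exact ⟨G₁, G₂, R₁, R₂, a, b, c, (norm_perm hp).symm.trans d⟩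
  | permE hp _ ih =>
      intro C₁ C₂ heq
      obtain ⟨G₁, G₂, R₁, R₂, a, b, c, d⟩ := ih heq
      exact ⟨G₁, G₂, R₁, R₂, a, b, c, (norm_cons_perm hp).symm.trans d⟩

/-- Inversion for name restrictions. -/
lemma inv_res {G C R} (h : CTyped G C R) :
    ∀ {x y D}, C = .res x y D →
    ∃ S Γ₁ Γ₂ G',
      CTyped (((x, Ty.sess S) :: Γ₁) :: ((y, Ty.sess S.dual) :: Γ₂) :: G') D R ∧
      HEnv.norm G = HEnv.norm ((Γ₁ ++ Γ₂) :: G') := by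
  induction h with
  | main _ => intro _ _ _ heq; exact Config.noConfusion heq
  | child _ => intro _ _ _ heq; exact Config.noConfusion heq
  | linkTh => intro _ _ _ heq; exact Config.noConfusion heq
  | par _ _ _ _ _ => intro _ _ _ heq; exact Config.noConfusion heq
  | res h hd _ =>
      intro x y D heq; cases heq; exact ⟨_, _, _, _, h, rfl⟩
  | permH hp _ ih =>
      intro x y D heq
      obtain ⟨S, Γ₁, Γ₂, G', a, d⟩ := ih heq
      exact ⟨S, Γ₁, Γ₂, G', a, (norm_perm hp).symm.trans d⟩
  | permE hp _ ih =>
      intro x y D heq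
      obtain ⟨S, Γ₁, Γ₂, G', a, d⟩ := ih heq
      exact ⟨S, Γ₁, Γ₂, G', a, (norm_cons_perm hp).symm.trans d⟩

lemma aux_single {A : Config} (hA : Aux A) {G R} (h : CTyped G A R) :
    ∃ Δ, G = [Δ] := by
  cases hA with
  | child => obtain ⟨Δ, hG, _⟩ := inv_thread h rfl; exact ⟨Δ, hG⟩
  | linkTh => obtain ⟨Δ, _, hG, _, _⟩ := inv_link h rfl; exact ⟨Δ, hG⟩

lemma toGEnv_perm {Γ Δ : Env} (h : List.Perm Γ Δ) :
    List.Perm (Env.toGEnv Γ) (Env.toGEnv Δ) := h.map _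

lemma toGEnv_append (Γ Δ : Env) :
    Env.toGEnv (Γ ++ Δ) = Env.toGEnv Γ ++ Env.toGEnv Δ := List.map_append

/-- Typing an auxiliary thread in GV from a single-environment HGV typing. -/
lemma aux_gtyped {A : Config} (hA : Aux A) {Δ : Env} {R : RTy}
    (h : CTyped [Δ] A R) : R = .child ∧ GTyped (Env.toGEnv Δ) A .child := by
  cases hA with
  | child =>
      obtain ⟨Γ, hG, hd⟩ := inv_thread h rfl
      injection hG with h1 _; subst h1
      rcases hd with ⟨T, h1, _, _⟩ | ⟨_, rfl, h3⟩
      · exact absurd h1 (by simp)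
      · exact ⟨rfl, .child h3⟩
  | linkTh =>
      obtain ⟨Γ, S, hG, rfl, hp⟩ := inv_link h rfl
      injection hG with h1 _; subst h1
      refine ⟨rfl, .perm (toGEnv_perm hp.symm) ?_⟩
      exact GTyped.linkTh

/-- **Every HGV configuration in tree canonical form typed under a single
environment is a well-typed GV configuration**: if `Γ ⊢ C : R` in HGV (with a
singleton hyper-environment) and `C` is in tree canonical form, then
`Γ ⊢ C : R` in GV. -/
theorem hgv_in_gv (Γ : Env) (C : Config) (R : RTy)
    (hty : CTyped [Γ] C R) (hcf : TCF C) :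
    GTyped (Env.toGEnv Γ) C R := by
  induction hcf generalizing Γ R with
  | thread =>
      obtain ⟨Γ', hG, hd⟩ := inv_thread hty rfl
      injection hG with h1 _; subst h1
      rcases hd with ⟨T, rfl, rfl, h3⟩ | ⟨rfl, rfl, h3⟩
      · exact .main h3
      · exact .child h3
  | @res A x C' y hAux hx hcf ih =>
      obtain ⟨S, Γ₁, Γ₂, G', hpar, hnorm⟩ := inv_res hty rfl
      have hlen := norm_len hnorm
      have hG' : G' = [] := by
        cases G' with
        | nil => rfl
        | cons => simp at hlen
      subst hG'
      have hperm : List.Perm Γ (Γ₁ ++ Γ₂) := by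
        simp only [HEnv.norm, List.map_cons, List.map_nil, Multiset.coe_eq_coe] at hnorm
        have := List.perm_singleton.mp hnorm
        injection this with h1 _
        exact Multiset.coe_eq_coe.mp h1
      obtain ⟨G₁, G₂, R₁, R₂, hA, hCF, hm, hn2⟩ := inv_par hpar rfl
      obtain ⟨Δ₁, rfl⟩ := aux_single hAux hA
      have hlen2 := norm_len hn2
      obtain ⟨Δ₂, rfl⟩ : ∃ Δ₂, G₂ = [Δ₂] := by
        cases G₂ with
        | nil => simp at hlen2
        | cons Δ₂ t =>
            cases t with
            | nil => exact ⟨Δ₂, rfl⟩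
            | cons => simp at hlen2
      obtain ⟨rfl, hAg⟩ := aux_gtyped hAux hA
      have hR : R₂ = R := by
        simp only [RTy.merge, Option.some.injEq] at hm
        exact hm
      subst hR
      have hCFg := ih Δ₂ R₂ hCF
      have hpair : List.Perm
          [((x, Ty.sess S) :: Γ₁ : Multiset (String × Ty)),
           ↑((y, Ty.sess S.dual) :: Γ₂)] [↑Δ₁, ↑Δ₂] := by
        simp only [HEnv.norm, List.map_cons, List.map_nil, List.cons_append,
          List.nil_append, Multiset.coe_eq_coe] at hn2
        exact hn2
      rcases pair_perm hpair with ⟨e1, e2⟩ | ⟨e1, e2⟩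
      · -- straight: Δ₁ ~ (x,S)::Γ₁, Δ₂ ~ (y,S.dual)::Γ₂
        have p1 : List.Perm Δ₁ ((x, Ty.sess S) :: Γ₁) :=
          (Multiset.coe_eq_coe.mp e1).symm
        have p2 : List.Perm Δ₂ ((y, Ty.sess S.dual) :: Γ₂) :=
          (Multiset.coe_eq_coe.mp e2).symm
        have hA' : GTyped (GEntry.single x (.sess S) :: Env.toGEnv Γ₁) A .child :=
          .perm (toGEnv_perm p1) hAg
        have hCF' : GTyped (GEntry.single y (.sess S.dual) :: Env.toGEnv Γ₂) C' R₂ :=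
          .perm (toGEnv_perm p2) hCFg
        have hc : GTyped (GEntry.chan x y S :: (Env.toGEnv Γ₁ ++ Env.toGEnv Γ₂))
            (.par A C') R₂ := .connect₁ hA' hCF' rfl
        refine .new (.perm (List.Perm.cons _ ?_) hc)
        rw [← toGEnv_append]
        exact toGEnv_perm hperm.symm
      · -- crossed: Δ₁ ~ (y,S.dual)::Γ₂, Δ₂ ~ (x,S)::Γ₁
        have p1 : List.Perm Δ₁ ((y, Ty.sess S.dual) :: Γ₂) :=
          (Multiset.coe_eq_coe.mp e2).symm
        have p2 : List.Perm Δ₂ ((x, Ty.sess S) :: Γ₁) :=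
          (Multiset.coe_eq_coe.mp e1).symm
        have hA' : GTyped (GEntry.single y (.sess S.dual) :: Env.toGEnv Γ₂) A .child :=
          .perm (toGEnv_perm p1) hAg
        have hCF' : GTyped (GEntry.single x (.sess S) :: Env.toGEnv Γ₁) C' R₂ :=
          .perm (toGEnv_perm p2) hCFg
        have hc : GTyped (GEntry.chan x y S :: (Env.toGEnv Γ₂ ++ Env.toGEnv Γ₁))
            (.par A C') R₂ := .connect₂ hA' hCF' rfl
        refine .new (.perm (List.Perm.cons _ ?_) hc)
        rw [← toGEnv_append]
        exact toGEnv_perm ((hperm.trans List.perm_append_comm).symm)
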